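/- arXiv:1904.08038 — 4 statements merged into one kernel-verified Lean document; each statement's English description precedes it below -/
import Mathlib

section
/- If f is nonnegative, integrable on ℝᵈ with ‖f‖₁ > 0, nonzero, and in Lᵖ, then the rescaled f̃ (as in the scaling lemma) satisfies ℐ(f̃) = (M/‖f‖ₚᵖ) · (1/‖f‖₁^{p(n-1)}) · ℐ(f), where ℐ(g) = ∫_{ℝᵈ} (𝒞ₙ(g)(x))ᵖ dx. -/
open MeasureTheory Real Set

noncomputable def conv {d : ℕ} (f g : EuclideanSpace ℝ (Fin d) → ℝ) :
    EuclideanSpace ℝ (Fin d) → ℝ :=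
  fun x => ∫ y, f y * g (x - y)

/-- `Cconv f n` is the `n`-fold convolution power `𝒞ₙ(f)` for `n ≥ 1`. -/
noncomputable def Cconv {d : ℕ} (f : EuclideanSpace ℝ (Fin d) → ℝ) :
    ℕ → EuclideanSpace ℝ (Fin d) → ℝ
  | 0 => f
  | 1 => f
  | (n + 2) => conv f (Cconv f (n + 1))

lemma conv_nonneg' {d : ℕ} {f g : EuclideanSpace ℝ (Fin d) → ℝ}
    (hf : ∀ x, 0 ≤ f x) (hg : ∀ x, 0 ≤ g x) : ∀ x, 0 ≤ conv f g x := by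
  intro x
  exact integral_nonneg fun y => mul_nonneg (hf y) (hg _)

lemma Cconv_nonneg {d : ℕ} {f : EuclideanSpace ℝ (Fin d) → ℝ}
    (hf : ∀ x, 0 ≤ f x) : ∀ n x, 0 ≤ Cconv f n x := by
  intro n
  induction n using Nat.strong_induction_on with
  | _ n ih =>
    match n with
    | 0 => exact hf
    | 1 => exact hf
    | (m+2) => exact conv_nonneg' hf (ih (m+1) (by omega))

lemma conv_scale {d : ℕ} (L : ℝ) (hL : 0 < L) (c c' : ℝ)
    (f h : EuclideanSpace ℝ (Fin d) → ℝ) (x : EuclideanSpace ℝ (Fin d)) :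
    conv (fun x => c * f (L⁻¹ • x)) (fun x => c' * h (L⁻¹ • x)) x
      = c * c' * L ^ d * conv f h (L⁻¹ • x) := by
  unfold conv
  have key : ∀ y : EuclideanSpace ℝ (Fin d),
      (c * f (L⁻¹ • y)) * (c' * h (L⁻¹ • (x - y)))
        = (c * c') * ((fun z => f z * h (L⁻¹ • x - z)) (L⁻¹ • y)) := by
    intro y; simp only [smul_sub]; ring
  simp_rw [key]
  rw [integral_const_mul, Measure.integral_comp_inv_smul_of_nonneg volume
    (fun z => f z * h (L⁻¹ • x - z)) hL.le, finrank_euclideanSpace_fin,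
    smul_eq_mul]
  ring

lemma Cconv_scale {d : ℕ} (L : ℝ) (hL : 0 < L) (c : ℝ)
    (f : EuclideanSpace ℝ (Fin d) → ℝ) :
    ∀ n, 1 ≤ n → ∀ x, Cconv (fun x => c * f (L⁻¹ • x)) n x
      = c ^ n * L ^ (d * (n - 1)) * Cconv f n (L⁻¹ • x) := by
  intro n
  induction n using Nat.strong_induction_on with
  | _ n ih =>
    match n with
    | 0 => intro h; omega
    | 1 => intro _ x; simp [Cconv]
    | (m+2) =>
      intro _ x
      have ihm := ih (m+1) (by omega) (by omega)
      have : Cconv (fun x => c * f (L⁻¹ • x)) (m+2) x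
          = conv (fun x => c * f (L⁻¹ • x))
              (fun x => (c ^ (m+1) * L ^ (d * m)) * Cconv f (m+1) (L⁻¹ • x)) x := by
        show conv _ (Cconv _ (m+1)) x = _
        unfold conv
        congr 1
        ext y
        rw [ihm]
        simp
      rw [this, conv_scale L hL c (c ^ (m+1) * L ^ (d * m)) f (Cconv f (m+1)) x]
      have hC : Cconv f (m+2) (L⁻¹ • x) = conv f (Cconv f (m+1)) (L⁻¹ • x) := rfl
      rw [hC]
      have h1 : m + 2 - 1 = m + 1 := rfl
      rw [h1]
      ring_nf

/-- The functional `ℐ(g) = ∫ (𝒞ₙ(g))ᵖ`. -/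
noncomputable def funcI {d : ℕ} (p : ℝ) (n : ℕ) (f : EuclideanSpace ℝ (Fin d) → ℝ) : ℝ :=
  ∫ x, (Cconv f n x) ^ p

lemma funcI_scale {d : ℕ} (p : ℝ) (hp : 1 < p) (L : ℝ) (hL : 0 < L) (c : ℝ) (hc : 0 ≤ c)
    (n : ℕ) (hn : 1 ≤ n) (f : EuclideanSpace ℝ (Fin d) → ℝ) (hf : ∀ x, 0 ≤ f x) :
    funcI p n (fun x => c * f (L⁻¹ • x))
      = (c ^ n * L ^ (d * (n - 1))) ^ p * L ^ d * funcI p n f := by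
  have hC : 0 ≤ c ^ n * L ^ (d * (n - 1)) := by positivity
  unfold funcI
  have step : ∀ x, (Cconv (fun x => c * f (L⁻¹ • x)) n x) ^ p
      = (c ^ n * L ^ (d * (n - 1))) ^ p * ((fun z => (Cconv f n z) ^ p) (L⁻¹ • x)) := by
    intro x
    rw [Cconv_scale L hL c f n hn x, Real.mul_rpow hC (Cconv_nonneg hf n _)]
  simp_rw [step]
  rw [integral_const_mul, Measure.integral_comp_inv_smul_of_nonneg volume
    (fun z => (Cconv f n z) ^ p) hL.le, finrank_euclideanSpace_fin, smul_eq_mul]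
  ring

lemma Ip_pos {d : ℕ} (p : ℝ) (hp : 1 < p) (f : EuclideanSpace ℝ (Fin d) → ℝ)
    (hf_mem : MemLp f (ENNReal.ofReal p)) (hf_nonneg : ∀ x, 0 ≤ f x)
    (hf_pos : 0 < ∫ x, f x) : 0 < ∫ x, f x ^ p := by
  have hp0 : (0:ℝ) < p := lt_trans one_pos hp
  have hint : Integrable (fun x => f x ^ p) := by
    have h := hf_mem.integrable_norm_rpow (by simp [hp0]) (by simp)
    rw [ENNReal.toReal_ofReal hp0.le] at h
    refine h.congr (Filter.Eventually.of_forall fun x => ?_)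
    simp only [Real.norm_of_nonneg (hf_nonneg x)]
  have hnn : 0 ≤ ∫ x, f x ^ p :=
    integral_nonneg fun x => Real.rpow_nonneg (hf_nonneg x) p
  rcases hnn.lt_or_eq with h | h
  · exact h
  · exfalso
    have hzero : (fun x => f x ^ p) =ᵐ[volume] 0 :=
      (integral_eq_zero_iff_of_nonneg (fun x => Real.rpow_nonneg (hf_nonneg x) p) hint).1 h.symm
    have hfz : f =ᵐ[volume] 0 := by
      filter_upwards [hzero] with x hx
      have : f x ^ p = 0 := hx
      simpa [Real.rpow_eq_zero (hf_nonneg x) hp0.ne'] using this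
    rw [integral_congr_ae hfz] at hf_pos
    simp at hf_pos
theorem scaling_functional {d : ℕ} (hd : 1 ≤ d) (p M : ℝ) (hp : 1 < p) (hM : 0 < M)
    (n : ℕ) (hn : 1 ≤ n)
    (f : EuclideanSpace ℝ (Fin d) → ℝ)
    (hf_int : Integrable f) (hf_mem : MemLp f (ENNReal.ofReal p))
    (hf_nonneg : ∀ x, 0 ≤ f x) (hf_pos : 0 < ∫ x, f x) :
    funcI p n
      (fun x => f ((((∫ y, f y ^ p) / (M * (∫ y, f y) ^ p)) ^ (1 / (d * (p - 1))) : ℝ)⁻¹ • x)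
        / ((((∫ y, f y ^ p) / (M * (∫ y, f y) ^ p)) ^ (1 / (d * (p - 1))) : ℝ) ^ d * ∫ y, f y))
      = (M / ∫ x, f x ^ p) * (1 / (∫ x, f x) ^ (p * (n - 1 : ℝ))) * funcI p n f := by
  have hp0 : (0:ℝ) < p := lt_trans one_pos hp
  have hI1 : 0 < ∫ x, f x := hf_pos
  have hIp : 0 < ∫ x, f x ^ p := Ip_pos p hp f hf_mem hf_nonneg hf_pos
  set I1 := ∫ x, f x with hI1def
  set Ip := ∫ x, f x ^ p with hIpdef
  have hA : 0 < Ip / (M * I1 ^ p) := by positivity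
  set A := Ip / (M * I1 ^ p) with hAdef
  set L := A ^ (1 / (↑d * (p - 1))) with hLdef
  have hL : 0 < L := Real.rpow_pos_of_pos hA _
  set B := L ^ d with hBdef
  have hB : 0 < B := pow_pos hL d
  have hc : (0:ℝ) ≤ (B * I1)⁻¹ := by positivity
  have hfun : (fun x => f (L⁻¹ • x) / (B * I1)) = (fun x => (B * I1)⁻¹ * f (L⁻¹ • x)) := by
    funext x; rw [div_eq_inv_mul]
  rw [hfun, funcI_scale p hp L hL _ hc n hn f hf_nonneg]
  congr 1
  obtain ⟨m, rfl⟩ : ∃ m, n = m + 1 := ⟨n - 1, by omega⟩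
  have hd0 : (d:ℝ) ≠ 0 := Nat.cast_ne_zero.2 (by omega)
  have hp1 : p - 1 ≠ 0 := by intro h; apply absurd hp; simp [show p = 1 by linarith]
  have hcast : ((m + 1 : ℕ) : ℝ) - 1 = (m : ℝ) := by push_cast; ring
  rw [hcast]
  have hLB : L ^ (d * (m + 1 - 1)) = B ^ m := by rw [hBdef, ← pow_mul]; norm_num
  rw [hLB]
  have hq : B = A ^ (p - 1)⁻¹ := by
    rw [hBdef, hLdef, ← Real.rpow_natCast (A ^ (1 / (↑d * (p - 1)))) d,
      ← Real.rpow_mul hA.le]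
    congr 1
    field_simp
  have hcoef : ((B * I1)⁻¹) ^ (m + 1) * B ^ m = B⁻¹ * (I1 ^ (m + 1))⁻¹ := by
    rw [inv_pow, mul_pow, pow_succ B m, mul_inv, mul_inv, mul_comm _ (B ^ m), ← mul_assoc,
      ← mul_assoc, mul_inv_cancel₀ (pow_ne_zero m hB.ne'), one_mul]
  rw [hcoef]
  have key1 : (B ^ p)⁻¹ * B = A⁻¹ := by
    rw [hq]
    rw [← Real.rpow_mul hA.le, ← Real.rpow_neg hA.le, ← Real.rpow_add hA,
      ← Real.rpow_neg_one A]
    congr 1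
    field_simp
    ring
  have key2 : (((I1 ^ (m + 1) : ℝ)) ^ p)⁻¹ = I1 ^ (-(((m : ℝ) + 1) * p)) := by
    rw [← Real.rpow_natCast I1 (m + 1), ← Real.rpow_mul hI1.le, ← Real.rpow_neg hI1.le]
    push_cast
    ring_nf
  have hAinv : A⁻¹ = M * I1 ^ p / Ip := by rw [hAdef, inv_div]
  calc (B⁻¹ * (I1 ^ (m + 1))⁻¹) ^ p * B
      = ((B ^ p)⁻¹ * B) * ((I1 ^ (m + 1) : ℝ) ^ p)⁻¹ := by
        rw [Real.mul_rpow (by positivity) (by positivity), Real.inv_rpow hB.le,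
          Real.inv_rpow (by positivity)]
        ring
    _ = (M * I1 ^ p / Ip) * I1 ^ (-(((m : ℝ) + 1) * p)) := by rw [key1, key2, hAinv]
    _ = M / Ip * (I1 ^ p * I1 ^ (-(((m : ℝ) + 1) * p))) := by ring
    _ = M / Ip * I1 ^ (p + -(((m : ℝ) + 1) * p)) := by rw [Real.rpow_add hI1]
    _ = M / Ip * I1 ^ (-(p * m)) := by
        rw [show p + -(((m : ℝ) + 1) * p) = -(p * m) by ring]
    _ = M / Ip * (1 / I1 ^ (p * m)) := by rw [Real.rpow_neg hI1.le, one_div]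
end

section
/- Let f_j, f be nonnegative radially decreasing functions on ℝᵈ with ‖f_j‖₁ ≤ 1, ‖f‖₁ ≤ 1, sup_j ‖f_j‖ₚᵖ ≤ M and ‖f‖ₚᵖ ≤ M for some p > 1, M > 0, and suppose f_j → f μ_d-almost everywhere. Then for every q with 1 < q < p, f_j → f strongly in L^q(ℝᵈ). -/
open MeasureTheory Real Set Filter

open Metric in
lemma aux_intOn_ball {d : ℕ} (hd : 1 ≤ d) {s : ℝ} (hs0 : 0 < s) (hsd : s < d) :
    IntegrableOn (fun x : EuclideanSpace ℝ (Fin d) => ‖x‖ ^ (-s)) (ball 0 1) := by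
  have : Nonempty (Fin d) := ⟨⟨0, hd⟩⟩
  have : Nontrivial (EuclideanSpace ℝ (Fin d)) := inferInstance
  set E := EuclideanSpace ℝ (Fin d)
  set c := volume (ball (0 : E) 1) with hc
  refine ⟨(by fun_prop : Measurable fun x : E => ‖x‖ ^ (-s)).aestronglyMeasurable, ?_⟩
  rw [hasFiniteIntegral_iff_ofReal (Eventually.of_forall fun x => Real.rpow_nonneg (norm_nonneg x) _)]
  set A : ℕ → Set E := fun n => {x | (2:ℝ)⁻¹ ^ (n+1) ≤ ‖x‖ ∧ ‖x‖ < (2:ℝ)⁻¹ ^ n} with hA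
  have hsub : ball (0:E) 1 \ {0} ⊆ ⋃ n, A n := by
    intro x hx
    have hx0 : 0 < ‖x‖ := by
      exact norm_pos_iff.2 (by simpa using hx.2)
    have hx1 : ‖x‖ < 1 := by simpa using hx.1
    have hex : ∃ n : ℕ, (2:ℝ)⁻¹ ^ (n+1) ≤ ‖x‖ := by
      obtain ⟨n, hn⟩ := exists_pow_lt_of_lt_one hx0 (by norm_num : (2:ℝ)⁻¹ < 1)
      exact ⟨n, le_of_lt (lt_of_le_of_lt (pow_le_pow_of_le_one (by norm_num) (by norm_num) (Nat.le_succ n)) hn)⟩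
    set n := Nat.find hex with hn
    refine mem_iUnion.2 ⟨n, Nat.find_spec hex, ?_⟩
    rcases Nat.eq_zero_or_pos n with h0 | hpos
    · simpa [h0] using hx1
    · have := Nat.find_min hex (m := n - 1) (by omega)
      push_neg at this
      simpa [Nat.sub_add_cancel hpos] using this
  have haeeq : (ball (0:E) 1 \ {0} : Set E) =ᵐ[volume] ball (0:E) 1 :=
    diff_ae_eq_self.2 (measure_mono_null inter_subset_right (measure_singleton 0))
  calc ∫⁻ x in ball (0:E) 1, ENNReal.ofReal (‖x‖ ^ (-s))
      = ∫⁻ x in ball (0:E) 1 \ {0}, ENNReal.ofReal (‖x‖ ^ (-s)) := (setLIntegral_congr haeeq).symm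
    _ ≤ ∫⁻ x in ⋃ n, A n, ENNReal.ofReal (‖x‖ ^ (-s)) := lintegral_mono_set hsub
    _ ≤ ∑' n, ∫⁻ x in A n, ENNReal.ofReal (‖x‖ ^ (-s)) := lintegral_iUnion_le _ _
    _ ≤ ∑' n, (ENNReal.ofReal (2 ^ s) * c) * (ENNReal.ofReal (2 ^ (s - (d:ℝ))))^n := by
        refine ENNReal.tsum_le_tsum fun n => ?_
        have hb : ∀ x ∈ A n, ENNReal.ofReal (‖x‖ ^ (-s)) ≤ ENNReal.ofReal (((2:ℝ)⁻¹ ^ (n+1)) ^ (-s)) := by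
          intro x hx
          exact ENNReal.ofReal_le_ofReal
            (Real.rpow_le_rpow_of_nonpos (pow_pos (by norm_num) _) hx.1 (neg_nonpos.2 hs0.le))
        calc ∫⁻ x in A n, ENNReal.ofReal (‖x‖ ^ (-s))
            ≤ ∫⁻ _ in A n, ENNReal.ofReal (((2:ℝ)⁻¹ ^ (n+1)) ^ (-s)) := setLIntegral_mono measurable_const hb
          _ = ENNReal.ofReal (((2:ℝ)⁻¹ ^ (n+1)) ^ (-s)) * volume (A n) := setLIntegral_const _ _
          _ ≤ ENNReal.ofReal (((2:ℝ)⁻¹ ^ (n+1)) ^ (-s)) * (ENNReal.ofReal (((2:ℝ)⁻¹ ^ n) ^ d) * c) := by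
              gcongr
              calc volume (A n) ≤ volume (ball (0:E) ((2:ℝ)⁻¹ ^ n)) := by
                    refine measure_mono fun x hx => ?_
                    simpa [mem_ball_zero_iff] using hx.2
                _ = ENNReal.ofReal (((2:ℝ)⁻¹ ^ n) ^ d) * c := by
                    rw [Measure.addHaar_ball_of_pos volume _ (pow_pos (by norm_num) n), finrank_euclideanSpace_fin]
          _ = (ENNReal.ofReal (2 ^ s) * c) * (ENNReal.ofReal (2 ^ (s - (d:ℝ))))^n := by
              have hreal : ((2:ℝ)⁻¹ ^ (n+1)) ^ (-s) * ((2:ℝ)⁻¹ ^ n) ^ d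
                  = 2 ^ s * ((2:ℝ) ^ (s - (d:ℝ))) ^ n := by
                have h1 : ((2:ℝ)⁻¹ ^ (n+1)) = (2:ℝ) ^ (-((n:ℝ)+1)) := by
                  have hcast : ((n:ℝ)+1) = ((n+1 : ℕ) : ℝ) := by push_cast; ring
                  rw [hcast, Real.rpow_neg (by norm_num), Real.rpow_natCast, inv_pow]
                have h2 : ((2:ℝ)⁻¹ ^ n) = (2:ℝ) ^ (-(n:ℝ)) := by
                  rw [Real.rpow_neg (by norm_num), Real.rpow_natCast, inv_pow]
                rw [h1, h2, ← Real.rpow_mul (by norm_num), ← Real.rpow_natCast ((2:ℝ) ^ (-(n:ℝ))) d,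
                  ← Real.rpow_mul (by norm_num), ← Real.rpow_add (by norm_num),
                  ← Real.rpow_natCast ((2:ℝ) ^ (s - (d:ℝ))) n, ← Real.rpow_mul (by norm_num),
                  ← Real.rpow_add (by norm_num)]
                congr 1
                push_cast
                ring
              calc ENNReal.ofReal (((2:ℝ)⁻¹ ^ (n+1)) ^ (-s)) * (ENNReal.ofReal (((2:ℝ)⁻¹ ^ n) ^ d) * c)
                  = ENNReal.ofReal (((2:ℝ)⁻¹ ^ (n+1)) ^ (-s) * ((2:ℝ)⁻¹ ^ n) ^ d) * c := by
                    rw [ENNReal.ofReal_mul (Real.rpow_nonneg (pow_nonneg (by norm_num) _) _)]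
                    ring
                _ = ENNReal.ofReal (2 ^ s * ((2:ℝ) ^ (s - (d:ℝ))) ^ n) * c := by rw [hreal]
                _ = (ENNReal.ofReal (2 ^ s) * c) * (ENNReal.ofReal (2 ^ (s - (d:ℝ))))^n := by
                    rw [ENNReal.ofReal_mul (Real.rpow_nonneg (by norm_num) _),
                      ENNReal.ofReal_pow (Real.rpow_nonneg (by norm_num) _)]
                    ring
    _ < ⊤ := by
        rw [ENNReal.tsum_mul_left, ENNReal.tsum_geometric]
        have hr1 : ENNReal.ofReal (2 ^ (s - (d:ℝ))) < 1 :=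
          ENNReal.ofReal_lt_one.2 (Real.rpow_lt_one_of_one_lt_of_neg one_lt_two (by linarith))
        exact ENNReal.mul_lt_top (ENNReal.mul_lt_top ENNReal.ofReal_lt_top measure_ball_lt_top)
          (ENNReal.inv_lt_top.2 (tsub_pos_of_lt hr1))

open Metric in
lemma aux_ball_bound {d : ℕ} (F : EuclideanSpace ℝ (Fin d) → ℝ) (A : ℝ)
    (hF0 : ∀ x, 0 ≤ F x)
    (hdec : ∀ x y : EuclideanSpace ℝ (Fin d), ‖x‖ ≤ ‖y‖ → F y ≤ F x)
    (hint : Integrable F) (hA : (∫ x, F x) ≤ A)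
    {x : EuclideanSpace ℝ (Fin d)} (hx : x ≠ 0) :
    F x * ((volume (ball (0:EuclideanSpace ℝ (Fin d)) 1)).toReal * ‖x‖ ^ d) ≤ A := by
  have hxnorm : 0 < ‖x‖ := norm_pos_iff.2 hx
  have hvol : (volume (ball (0:EuclideanSpace ℝ (Fin d)) ‖x‖)).toReal
      = (volume (ball (0:EuclideanSpace ℝ (Fin d)) 1)).toReal * ‖x‖ ^ d := by
    rw [Measure.addHaar_ball_of_pos volume _ hxnorm, finrank_euclideanSpace_fin,
      ENNReal.toReal_mul, ENNReal.toReal_ofReal (by positivity)]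
    ring
  calc F x * ((volume (ball (0:EuclideanSpace ℝ (Fin d)) 1)).toReal * ‖x‖ ^ d)
      = ∫ _ in ball (0:EuclideanSpace ℝ (Fin d)) ‖x‖, F x := by
        rw [setIntegral_const, smul_eq_mul, measureReal_def, hvol, mul_comm]
    _ ≤ ∫ y in ball (0:EuclideanSpace ℝ (Fin d)) ‖x‖, F y := by
        refine setIntegral_mono_on (integrableOn_const measure_ball_lt_top.ne)
          hint.integrableOn measurableSet_ball fun y hy => ?_
        exact hdec y x (le_of_lt (mem_ball_zero_iff.1 hy))
    _ ≤ ∫ y, F y := setIntegral_le_integral hint (Eventually.of_forall hF0)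
    _ ≤ A := hA

theorem strong_Lq_convergence {d : ℕ} (hd : 1 ≤ d) (p M : ℝ) (hp : 1 < p) (hM : 0 < M)
    (f : ℕ → EuclideanSpace ℝ (Fin d) → ℝ) (g : EuclideanSpace ℝ (Fin d) → ℝ)
    (hf_meas : ∀ j, Measurable (f j)) (hg_meas : Measurable g)
    (hf_nonneg : ∀ j x, 0 ≤ f j x) (hg_nonneg : ∀ x, 0 ≤ g x)
    (hf_raddec : ∀ j, ∀ x y : EuclideanSpace ℝ (Fin d), ‖x‖ ≤ ‖y‖ → f j y ≤ f j x)
    (hg_raddec : ∀ x y : EuclideanSpace ℝ (Fin d), ‖x‖ ≤ ‖y‖ → g y ≤ g x)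
    (hf_int : ∀ j, Integrable (f j)) (hg_int : Integrable g)
    (hf_memp : ∀ j, MemLp (f j) (ENNReal.ofReal p)) (hg_memp : MemLp g (ENNReal.ofReal p))
    (hf1 : ∀ j, (∫ x, f j x) ≤ 1) (hg1 : (∫ x, g x) ≤ 1)
    (hfp : ∀ j, (∫ x, f j x ^ p) ≤ M) (hgp : (∫ x, g x ^ p) ≤ M)
    (hae : ∀ᵐ x, Tendsto (fun j => f j x) atTop (nhds (g x))) :
    ∀ q : ℝ, 1 < q → q < p →
      Tendsto (fun j => ∫ x, |f j x - g x| ^ q) atTop (nhds 0) := by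
  intro q hq1 hqp
  have hp0 : 0 < p := lt_trans one_pos hp
  have hq0 : 0 < q := lt_trans one_pos hq1
  have hNE : Nonempty (Fin d) := ⟨⟨0, hd⟩⟩
  have hNT : Nontrivial (EuclideanSpace ℝ (Fin d)) := inferInstance
  set c := (volume (Metric.ball (0:EuclideanSpace ℝ (Fin d)) 1)).toReal with hc
  have hc0 : 0 < c :=
    ENNReal.toReal_pos (Metric.measure_ball_pos volume 0 one_pos).ne' measure_ball_lt_top.ne
  set h : EuclideanSpace ℝ (Fin d) → ℝ := fun x => min ((c * ‖x‖ ^ d)⁻¹) ((M * (c * ‖x‖ ^ d)⁻¹) ^ p⁻¹) with hh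
  have h_nonneg : ∀ x, 0 ≤ h x := fun x =>
    le_min (by positivity) (Real.rpow_nonneg (by positivity) _)
  -- pointwise bound for every function in the family
  have key : ∀ F : EuclideanSpace ℝ (Fin d) → ℝ, (∀ x, 0 ≤ F x) →
      (∀ x y : EuclideanSpace ℝ (Fin d), ‖x‖ ≤ ‖y‖ → F y ≤ F x) → Integrable F → MemLp F (ENNReal.ofReal p) →
      (∫ x, F x) ≤ 1 → (∫ x, F x ^ p) ≤ M → ∀ x : EuclideanSpace ℝ (Fin d), x ≠ 0 → F x ≤ h x := by
    intro F h0 hdec hint hmem hI1 hIp x hx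
    have hxn : 0 < ‖x‖ := norm_pos_iff.2 hx
    have hcx : 0 < c * ‖x‖ ^ d := by positivity
    have b1 : F x ≤ (c * ‖x‖ ^ d)⁻¹ := by
      have hb := aux_ball_bound F 1 h0 hdec hint hI1 hx
      calc F x = F x * (c * ‖x‖ ^ d) / (c * ‖x‖ ^ d) := by field_simp
        _ ≤ 1 / (c * ‖x‖ ^ d) := by gcongr
        _ = (c * ‖x‖ ^ d)⁻¹ := one_div _
    have b2 : F x ≤ (M * (c * ‖x‖ ^ d)⁻¹) ^ p⁻¹ := by
      have hFp_dec : ∀ a b : EuclideanSpace ℝ (Fin d), ‖a‖ ≤ ‖b‖ → F b ^ p ≤ F a ^ p := fun a b hab =>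
        Real.rpow_le_rpow (h0 b) (hdec a b hab) hp0.le
      have hFp_int : Integrable (fun y => F y ^ p) := by
        have hi := hmem.integrable_norm_rpow (by simp [hp0]) ENNReal.ofReal_ne_top
        refine hi.congr (Eventually.of_forall fun y => ?_)
        simp [ENNReal.toReal_ofReal hp0.le, Real.norm_eq_abs, abs_of_nonneg (h0 y)]
      have hb := aux_ball_bound (fun y => F y ^ p) M
        (fun y => Real.rpow_nonneg (h0 y) p) hFp_dec hFp_int hIp hx
      have h3 : F x ^ p ≤ M * (c * ‖x‖ ^ d)⁻¹ := by
        calc F x ^ p = F x ^ p * (c * ‖x‖ ^ d) / (c * ‖x‖ ^ d) := by field_simp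
          _ ≤ M / (c * ‖x‖ ^ d) := by gcongr
          _ = M * (c * ‖x‖ ^ d)⁻¹ := div_eq_mul_inv _ _
      calc F x = (F x ^ p) ^ p⁻¹ := (Real.rpow_rpow_inv (h0 x) hp0.ne').symm
        _ ≤ (M * (c * ‖x‖ ^ d)⁻¹) ^ p⁻¹ :=
            Real.rpow_le_rpow (Real.rpow_nonneg (h0 x) p) h3 (by positivity)
    exact le_min b1 b2
  have hae0 : ∀ᵐ x : EuclideanSpace ℝ (Fin d), x ≠ 0 := by
    have h0 : volume ({0} : Set (EuclideanSpace ℝ (Fin d))) = 0 := measure_singleton 0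
    rw [ae_iff]
    simpa [not_not, setOf_eq_eq_singleton] using h0
  set bound : EuclideanSpace ℝ (Fin d) → ℝ := fun x => h x ^ q with hbd
  have hmeas_b : AEStronglyMeasurable bound volume := by
    apply Measurable.aestronglyMeasurable
    fun_prop
  have bound_int : Integrable bound := by
    rw [← integrableOn_univ, ← union_compl_self (Metric.ball (0:EuclideanSpace ℝ (Fin d)) 1)]
    refine IntegrableOn.union ?_ ?_
    · -- near the origin
      set s' : ℝ := (d:ℝ) * q / p with hs'
      have hs'0 : 0 < s' := by positivity
      have hs'd : s' < d := by
        rw [hs', div_lt_iff₀ hp0]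
        have hd1 : (1:ℝ) ≤ d := by exact_mod_cast hd
        nlinarith
      have hint := (aux_intOn_ball hd hs'0 hs'd).const_mul (((M / c) ^ p⁻¹) ^ q)
      refine hint.mono' hmeas_b.restrict ?_
      rw [ae_restrict_iff' measurableSet_ball]
      refine Eventually.of_forall fun x hxball => ?_
      simp only [hbd]
      rw [Real.norm_eq_abs, abs_of_nonneg (Real.rpow_nonneg (h_nonneg x) q)]
      by_cases hx0 : x = 0
      · subst hx0
        simp [hh, zero_pow (by omega : d ≠ 0), Real.zero_rpow (inv_ne_zero hp0.ne'),
          Real.zero_rpow hq0.ne', Real.zero_rpow (neg_ne_zero.2 hs'0.ne')]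
      · have hxn : 0 < ‖x‖ := norm_pos_iff.2 hx0
        have step1 : h x ≤ (M * (c * ‖x‖ ^ d)⁻¹) ^ p⁻¹ := min_le_right _ _
        have step2 : (M * (c * ‖x‖ ^ d)⁻¹) ^ p⁻¹ = (M / c) ^ p⁻¹ * ‖x‖ ^ (-((d:ℝ) / p)) := by
          have e0 : M * (c * ‖x‖ ^ d)⁻¹ = (M / c) * (‖x‖ ^ (d:ℕ))⁻¹ := by
            rw [mul_inv]; ring
          rw [e0, Real.mul_rpow (by positivity) (by positivity)]
          congr 1
          rw [← Real.rpow_natCast ‖x‖ d, ← Real.rpow_neg (norm_nonneg x),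
            ← Real.rpow_mul (norm_nonneg x)]
          congr 1
          ring
        calc h x ^ q ≤ ((M / c) ^ p⁻¹ * ‖x‖ ^ (-((d:ℝ) / p))) ^ q :=
              Real.rpow_le_rpow (h_nonneg x) (step2 ▸ step1) hq0.le
          _ = ((M / c) ^ p⁻¹) ^ q * ‖x‖ ^ (-s') := by
              rw [Real.mul_rpow (by positivity) (by positivity),
                ← Real.rpow_mul (norm_nonneg x)]
              congr 2
              rw [hs']
              ring
    · -- away from the origin
      have hd1 : (1:ℝ) ≤ d := by exact_mod_cast hd
      have hdq : (Module.finrank ℝ (EuclideanSpace ℝ (Fin d)) : ℝ) < (d:ℝ) * q := by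
        rw [finrank_euclideanSpace_fin]
        nlinarith
      have hint0 : Integrable (fun x : EuclideanSpace ℝ (Fin d) => (1 + ‖x‖) ^ (-((d:ℝ) * q))) :=
        integrable_one_add_norm hdq
      have hint : IntegrableOn (fun x : EuclideanSpace ℝ (Fin d) =>
          c⁻¹ ^ q * 2 ^ ((d:ℝ) * q) * (1 + ‖x‖) ^ (-((d:ℝ) * q)))
          (Metric.ball (0:EuclideanSpace ℝ (Fin d)) 1)ᶜ :=
        (hint0.const_mul ((c⁻¹) ^ q * 2 ^ ((d:ℝ) * q))).integrableOn
      refine hint.mono' hmeas_b.restrict ?_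
      rw [ae_restrict_iff' measurableSet_ball.compl]
      refine Eventually.of_forall fun x hxc => ?_
      simp only [hbd]
      have hx1 : 1 ≤ ‖x‖ := by
        simpa [mem_ball_zero_iff, not_lt] using hxc
      have hxn : 0 < ‖x‖ := lt_of_lt_of_le one_pos hx1
      rw [Real.norm_eq_abs, abs_of_nonneg (Real.rpow_nonneg (h_nonneg x) q)]
      have step1 : h x ≤ (c * ‖x‖ ^ d)⁻¹ := min_le_left _ _
      have e1 : ((c * ‖x‖ ^ d)⁻¹ : ℝ) = c⁻¹ * ‖x‖ ^ (-(d:ℝ)) := by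
        rw [mul_inv, ← Real.rpow_natCast ‖x‖ d, ← Real.rpow_neg (norm_nonneg x)]
      have key2 : ‖x‖ ^ (-((d:ℝ) * q)) ≤ 2 ^ ((d:ℝ) * q) * (1 + ‖x‖) ^ (-((d:ℝ) * q)) := by
        have h2x : (1 + ‖x‖) / 2 ≤ ‖x‖ := by linarith
        calc ‖x‖ ^ (-((d:ℝ) * q)) ≤ ((1 + ‖x‖) / 2) ^ (-((d:ℝ) * q)) :=
              Real.rpow_le_rpow_of_nonpos (by positivity) h2x (neg_nonpos.2 (by positivity))
          _ = 2 ^ ((d:ℝ) * q) * (1 + ‖x‖) ^ (-((d:ℝ) * q)) := by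
              rw [div_eq_mul_inv, Real.mul_rpow (by positivity) (by positivity),
                Real.inv_rpow (by norm_num), ← Real.rpow_neg (by norm_num), neg_neg]
              ring
      calc h x ^ q ≤ (c⁻¹ * ‖x‖ ^ (-(d:ℝ))) ^ q :=
            Real.rpow_le_rpow (h_nonneg x) (e1 ▸ step1) hq0.le
        _ = c⁻¹ ^ q * ‖x‖ ^ (-((d:ℝ) * q)) := by
            rw [Real.mul_rpow (by positivity) (by positivity),
              ← Real.rpow_mul (norm_nonneg x), neg_mul]
        _ ≤ c⁻¹ ^ q * (2 ^ ((d:ℝ) * q) * (1 + ‖x‖) ^ (-((d:ℝ) * q))) :=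
            mul_le_mul_of_nonneg_left key2 (by positivity)
        _ = c⁻¹ ^ q * 2 ^ ((d:ℝ) * q) * (1 + ‖x‖) ^ (-((d:ℝ) * q)) := by ring
  have h_bound : ∀ j, ∀ᵐ x : EuclideanSpace ℝ (Fin d), ‖|f j x - g x| ^ q‖ ≤ bound x := by
    intro j
    filter_upwards [hae0] with x hx
    simp only [hbd]
    rw [Real.norm_eq_abs, abs_of_nonneg (Real.rpow_nonneg (abs_nonneg _) q)]
    have hf' : f j x ≤ h x :=
      key (f j) (hf_nonneg j) (hf_raddec j) (hf_int j) (hf_memp j) (hf1 j) (hfp j) x hx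
    have hg' : g x ≤ h x := key g hg_nonneg hg_raddec hg_int hg_memp hg1 hgp x hx
    have h1 : |f j x - g x| ≤ h x := by
      rw [abs_le]
      constructor
      · linarith [hf_nonneg j x, hg_nonneg x, hg']
      · linarith [hf_nonneg j x, hg_nonneg x, hf']
    exact Real.rpow_le_rpow (abs_nonneg _) h1 hq0.le
  have h_lim : ∀ᵐ x : EuclideanSpace ℝ (Fin d), Tendsto (fun j => |f j x - g x| ^ q) atTop (nhds ((fun _ : EuclideanSpace ℝ (Fin d) => (0:ℝ)) x)) := by
    filter_upwards [hae] with x hx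
    have h2 : Tendsto (fun j => |f j x - g x|) atTop (nhds 0) := by
      have h2' := (hx.sub (tendsto_const_nhds (x := g x))).abs
      simpa using h2'
    have h3 := h2.rpow_const (Or.inr hq0.le)
    simpa [Real.zero_rpow hq0.ne'] using h3
  have hFm : ∀ j, AEStronglyMeasurable (fun x : EuclideanSpace ℝ (Fin d) => |f j x - g x| ^ q) volume := by
    intro j
    apply Measurable.aestronglyMeasurable
    fun_prop
  have hfinal := tendsto_integral_of_dominated_convergence bound hFm bound_int h_bound h_lim
  simpa using hfinal
end

section
/- Let Q ∈ ℱ (nonnegative, ‖Q‖₁ = 1, ‖Q‖ₚᵖ = M) satisfy the Euler-Lagrange equation 𝒯(𝒞_{n−1}(Q)) ∗ (𝒞ₙ(Q))^{p−1} = (Λ/(Mn)) Q^{p−1} + Λ(n−1)/n on {Q > 0}. Then ∫_{ℝᵈ} (𝒞ₙ(Q)(x))ᵖ dx = Λ, i.e. ℐ(Q) = Λ. -/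
open MeasureTheory Real Set

/-- `convIter f k h = 𝒞ₖ(f) ∗ h`, with the convention `𝒞₀(f) ∗ h = h`. -/
noncomputable def convIter {d : ℕ} (f : EuclideanSpace ℝ (Fin d) → ℝ) :
    ℕ → (EuclideanSpace ℝ (Fin d) → ℝ) → EuclideanSpace ℝ (Fin d) → ℝ
  | 0, h => h
  | (k + 1), h => conv f (convIter f k h)

namespace ELaux

open scoped ENNReal

variable {d : ℕ}

local notation "Edim" => EuclideanSpace ℝ (Fin d)

/-- `ℝ≥0∞`-valued convolution. -/
noncomputable def convE (F G : Edim → ℝ≥0∞) : Edim → ℝ≥0∞ := fun x => ∫⁻ y, F y * G (x - y)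

/-- `ℝ≥0∞`-valued convolution powers, mirroring `Cconv`. -/
noncomputable def CconvE (F : Edim → ℝ≥0∞) : ℕ → Edim → ℝ≥0∞
  | 0 => F
  | 1 => F
  | (k + 2) => convE F (CconvE F (k + 1))

/-- `ℝ≥0∞`-valued iterated convolution, mirroring `convIter`. -/
noncomputable def convIterE (F : Edim → ℝ≥0∞) : ℕ → (Edim → ℝ≥0∞) → Edim → ℝ≥0∞
  | 0, H => H
  | (k + 1), H => convE F (convIterE F k H)

lemma convE_measurable {F G : Edim → ℝ≥0∞} (hF : Measurable F) (hG : Measurable G) :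
    Measurable (convE F G) := by
  apply Measurable.lintegral_prod_right
  exact (hF.comp measurable_snd).mul (hG.comp (measurable_fst.sub measurable_snd))

lemma CconvE_meas {F : Edim → ℝ≥0∞} (hF : Measurable F) : ∀ k, Measurable (CconvE F k)
  | 0 => hF
  | 1 => hF
  | (k + 2) => convE_measurable hF (CconvE_meas hF (k + 1))

lemma convIterE_meas {F H : Edim → ℝ≥0∞} (hF : Measurable F) (hH : Measurable H) :
    ∀ k, Measurable (convIterE F k H)
  | 0 => hH
  | (k + 1) => convE_measurable hF (convIterE_meas hF hH k)

lemma lintegral_shift (G : Edim → ℝ≥0∞) (y : Edim) : ∫⁻ x, G (x - y) = ∫⁻ x, G x :=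
  lintegral_sub_right_eq_self G y

lemma lintegral_shift' (G : Edim → ℝ≥0∞) (y : Edim) : ∫⁻ x, G (x + y) = ∫⁻ x, G x :=
  lintegral_add_right_eq_self G y

lemma lintegral_neg_eq (G : Edim → ℝ≥0∞) (hG : Measurable G) : ∫⁻ x, G (-x) = ∫⁻ x, G x := by
  conv_rhs => rw [← Measure.map_neg_eq_self (volume : Measure Edim)]
  rw [lintegral_map hG measurable_neg]

lemma lintegral_reflect (G : Edim → ℝ≥0∞) (hG : Measurable G) (x : Edim) :
    ∫⁻ y, G (x - y) = ∫⁻ y, G y := by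
  have h1 : ∀ y : Edim, G (x - y) = (fun u => G (-u)) (y - x) := by
    intro y; simp [neg_sub]
  simp_rw [h1]
  rw [lintegral_shift (fun u => G (-u)) x]
  exact lintegral_neg_eq G hG

/-- Transfer of an a.e. property along a measure preserving map. -/
lemma ae_comp_mp {f : Edim → Edim} (hf : MeasurePreserving f (volume : Measure Edim) volume)
    {P : Edim → Prop} (h : ∀ᵐ z, P z) : ∀ᵐ y, P (f y) :=
  ae_of_ae_map hf.measurable.aemeasurable (by rwa [hf.map_eq])

lemma lintegral_convE {F G : Edim → ℝ≥0∞} (hF : Measurable F) (hG : Measurable G) :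
    ∫⁻ x, convE F G x = (∫⁻ y, F y) * ∫⁻ y, G y := by
  unfold convE
  rw [lintegral_lintegral_swap]
  · have key : ∀ y : Edim, (∫⁻ x, F y * G (x - y)) = F y * ∫⁻ x, G x := by
      intro y
      have hGy : Measurable fun x : Edim => G (x - y) :=
        hG.comp (measurable_id.sub measurable_const)
      rw [lintegral_const_mul _ hGy, lintegral_shift]
    simp_rw [key]
    rw [lintegral_mul_const _ hF, mul_comm]
  · exact ((hF.comp measurable_snd).mul (hG.comp (measurable_fst.sub measurable_snd))).aemeasurable

lemma lintegral_CconvE {F : Edim → ℝ≥0∞} (hF : Measurable F) (hF1 : ∫⁻ y, F y = 1) :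
    ∀ k, ∫⁻ x, CconvE F k x = 1
  | 0 => hF1
  | 1 => hF1
  | (k + 2) => by
      rw [show CconvE F (k + 2) = convE F (CconvE F (k + 1)) from rfl,
        lintegral_convE hF (CconvE_meas hF (k + 1)), hF1, lintegral_CconvE hF hF1 (k + 1), one_mul]

/-- The adjoint identity `∫ A · (𝒯F ∗ G) = ∫ (F ∗ A) · G`. -/
lemma adjoint {F G A : Edim → ℝ≥0∞} (hF : Measurable F) (hG : Measurable G)
    (hA : Measurable A) :
    ∫⁻ x, A x * convE (fun y => F (-y)) G x = ∫⁻ z, convE F A z * G z := by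
  unfold convE
  have step1 : ∀ x : Edim, (∫⁻ y, F (-y) * G (x - y)) = ∫⁻ u, F u * G (x + u) := by
    intro x
    have h : Measurable fun u : Edim => F u * G (x + u) :=
      hF.mul (hG.comp (measurable_const.add measurable_id))
    have := lintegral_neg_eq (fun u => F u * G (x + u)) h
    simpa [sub_eq_add_neg, add_comm] using this
  simp_rw [step1]
  have hmul : ∀ x : Edim, A x * ∫⁻ u, F u * G (x + u) = ∫⁻ u, A x * (F u * G (x + u)) := by
    intro x
    have h1 : Measurable fun u : Edim => F u * G (x + u) :=
      hF.mul (hG.comp (measurable_const.add measurable_id))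
    rw [lintegral_const_mul _ h1]
  simp_rw [hmul]
  rw [lintegral_lintegral_swap
    (((hA.comp measurable_fst).mul ((hF.comp measurable_snd).mul
      (hG.comp (measurable_fst.add measurable_snd)))).aemeasurable)]
  have step2 : ∀ u : Edim, (∫⁻ x, A x * (F u * G (x + u))) = ∫⁻ z, F u * (A (z - u) * G z) := by
    intro u
    have h : Measurable fun z : Edim => A (z - u) * G z :=
      (hA.comp (measurable_id.sub measurable_const)).mul hG
    have hrw : ∀ x : Edim, A x * (F u * G (x + u)) = F u * (A (x + u - u) * G (x + u)) := by
      intro x; rw [add_sub_cancel_right]; ring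
    simp_rw [hrw]
    have h2 : Measurable fun x : Edim => A (x + u - u) * G (x + u) :=
      h.comp (measurable_id.add measurable_const)
    rw [lintegral_const_mul _ h2, lintegral_const_mul _ h]
    congr 1
    exact lintegral_shift' (fun z => A (z - u) * G z) u
  simp_rw [step2]
  rw [lintegral_lintegral_swap
    (((hF.comp measurable_fst).mul ((hA.comp (measurable_snd.sub measurable_fst)).mul
      (hG.comp measurable_snd))).aemeasurable)]
  congr 1
  ext z
  have h3 : Measurable fun u : Edim => F u * A (z - u) :=
    hF.mul (hA.comp (measurable_const.sub measurable_id))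
  simp_rw [← mul_assoc]
  rw [lintegral_mul_const _ h3]

lemma convIterE_comm (F : Edim → ℝ≥0∞) :
    ∀ k (A : Edim → ℝ≥0∞), convIterE F k (convE F A) = convE F (convIterE F k A)
  | 0, _ => rfl
  | (k + 1), A => by
      show convE F (convIterE F k (convE F A)) = _
      rw [convIterE_comm F k A]
      rfl

lemma convIterE_self (F : Edim → ℝ≥0∞) : ∀ k, convIterE F k F = CconvE F (k + 1)
  | 0 => rfl
  | (k + 1) => by
      show convE F (convIterE F k F) = CconvE F (k + 2)
      rw [convIterE_self F k]
      rfl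

/-- The iterated adjoint identity. -/
lemma adj_iter {F H : Edim → ℝ≥0∞} (hF : Measurable F) (hH : Measurable H) :
    ∀ k (A : Edim → ℝ≥0∞), Measurable A →
      (∫⁻ x, A x * convIterE (fun y => F (-y)) k H x) = ∫⁻ z, convIterE F k A z * H z
  | 0, A, _ => rfl
  | (k + 1), A, hA => by
      have h1 : (∫⁻ x, A x * convE (fun y => F (-y)) (convIterE (fun y => F (-y)) k H) x)
          = ∫⁻ z, convE F A z * convIterE (fun y => F (-y)) k H z :=
        adjoint hF (convIterE_meas (hF.comp measurable_neg) hH k) hA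
      calc (∫⁻ x, A x * convIterE (fun y => F (-y)) (k + 1) H x)
          = ∫⁻ z, convE F A z * convIterE (fun y => F (-y)) k H z := h1
        _ = ∫⁻ z, convIterE F k (convE F A) z * H z :=
            adj_iter hF hH k (convE F A) (convE_measurable hF hA)
        _ = ∫⁻ z, convIterE F (k + 1) A z * H z := by rw [convIterE_comm]; rfl

/-- pointwise Jensen: `(convE F G x) ^ p ≤ ∫⁻ y, F y * G (x - y) ^ p` when `∫⁻ F = 1`. -/
lemma convE_pow_le {F G : Edim → ℝ≥0∞} (hF : Measurable F) (hG : Measurable G)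
    (hF1 : ∫⁻ y, F y = 1) {p : ℝ} (hp : 1 < p) (x : Edim) :
    convE F G x ^ p ≤ ∫⁻ y, F y * G (x - y) ^ p := by
  set q := Real.conjExponent p with hqdef
  have hpq : p.HolderConjugate q := Real.HolderConjugate.conjExponent hp
  have hq1 : (1 : ℝ)/q + 1/p = 1 := by
    have := hpq.symm.inv_add_inv_eq_one
    rw [one_div, one_div]; linarith [this]
  have hsplit : ∀ y : Edim, F y * G (x - y) = (F y ^ (1/q)) * (F y ^ (1/p) * G (x - y)) := by
    intro y
    rw [← mul_assoc, ← ENNReal.rpow_add_of_nonneg _ _ hpq.symm.one_div_nonneg hpq.one_div_nonneg,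
      hq1, ENNReal.rpow_one]
  have hholder := ENNReal.lintegral_mul_le_Lp_mul_Lq volume hpq.symm
      (f := fun y => F y ^ (1/q)) (g := fun y => F y ^ (1/p) * G (x - y))
      ((hF.pow_const _).aemeasurable)
      (((hF.pow_const _).mul (hG.comp (measurable_const.sub measurable_id))).aemeasurable)
  have e1 : (∫⁻ y, (F y ^ (1/q)) ^ q) = 1 := by
    have : ∀ y : Edim, (F y ^ (1/q)) ^ q = F y := by
      intro y
      rw [← ENNReal.rpow_mul, one_div, inv_mul_cancel₀ hpq.symm.ne_zero, ENNReal.rpow_one]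
    simp_rw [this]; exact hF1
  have e2 : ∀ y : Edim, (F y ^ (1/p) * G (x - y)) ^ p = F y * G (x - y) ^ p := by
    intro y
    rw [ENNReal.mul_rpow_of_nonneg _ _ hpq.nonneg, ← ENNReal.rpow_mul, one_div,
      inv_mul_cancel₀ hpq.ne_zero, ENNReal.rpow_one]
  have hbound : convE F G x ≤ (∫⁻ y, F y * G (x - y) ^ p) ^ (1/p) := by
    calc convE F G x = ∫⁻ y, (F y ^ (1/q)) * (F y ^ (1/p) * G (x - y)) := by
          unfold convE; simp_rw [← hsplit]
      _ ≤ (∫⁻ y, (F y ^ (1/q)) ^ q) ^ (1/q) * (∫⁻ y, (F y ^ (1/p) * G (x - y)) ^ p) ^ (1/p) :=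
          hholder
      _ = (∫⁻ y, F y * G (x - y) ^ p) ^ (1/p) := by
          rw [e1]; simp_rw [e2]; rw [ENNReal.one_rpow, one_mul]
  calc convE F G x ^ p ≤ ((∫⁻ y, F y * G (x - y) ^ p) ^ (1/p)) ^ p :=
        ENNReal.rpow_le_rpow hbound hpq.nonneg
    _ = ∫⁻ y, F y * G (x - y) ^ p := by
        rw [← ENNReal.rpow_mul, one_div, inv_mul_cancel₀ hpq.ne_zero, ENNReal.rpow_one]

/-- Young's inequality in the special case of an `L¹`-normalized first factor. -/
lemma young {F G : Edim → ℝ≥0∞} (hF : Measurable F) (hG : Measurable G)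
    (hF1 : ∫⁻ y, F y = 1) {p : ℝ} (hp : 1 < p) :
    ∫⁻ x, convE F G x ^ p ≤ ∫⁻ x, G x ^ p := by
  calc ∫⁻ x, convE F G x ^ p ≤ ∫⁻ x, ∫⁻ y, F y * G (x - y) ^ p :=
        lintegral_mono fun x => convE_pow_le hF hG hF1 hp x
    _ = (∫⁻ y, F y) * ∫⁻ x, G x ^ p := lintegral_convE hF (hG.pow_const _)
    _ = ∫⁻ x, G x ^ p := by rw [hF1, one_mul]

lemma CconvE_Lp {F : Edim → ℝ≥0∞} (hF : Measurable F) (hF1 : ∫⁻ y, F y = 1)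
    {p : ℝ} (hp : 1 < p) : ∀ k, ∫⁻ x, CconvE F k x ^ p ≤ ∫⁻ x, F x ^ p
  | 0 => le_rfl
  | 1 => le_rfl
  | (k + 2) =>
      (young hF (CconvE_meas hF (k + 1)) hF1 hp).trans (CconvE_Lp hF hF1 hp (k + 1))

lemma convIterE_Lq {F H : Edim → ℝ≥0∞} (hF : Measurable F) (hH : Measurable H)
    (hF1 : ∫⁻ y, F y = 1) {q : ℝ} (hq : 1 < q) :
    ∀ k, ∫⁻ x, convIterE F k H x ^ q ≤ ∫⁻ x, H x ^ q
  | 0 => le_rfl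
  | (k + 1) =>
      (young hF (convIterE_meas hF hH k) hF1 hq).trans (convIterE_Lq hF hH hF1 hq k)

/-- Bridge from the real convolution to the `ℝ≥0∞`-valued one. -/
lemma conv_toReal {w : Edim → ℝ} (hw : Measurable w) (hw0 : ∀ y, 0 ≤ w y)
    {G : Edim → ℝ≥0∞} (hG : Measurable G) (hGfin : ∀ᵐ z, G z < ∞)
    {g : Edim → ℝ} (hg : ∀ z, g z = (G z).toReal) (x : Edim) :
    conv w g x = (convE (fun y => ENNReal.ofReal (w y)) G x).toReal := by
  have hfin : ∀ᵐ y, ENNReal.ofReal (w y) * G (x - y) < ∞ := by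
    have h1 : ∀ᵐ y, G (x - y) < ∞ :=
      ae_comp_mp (Measure.measurePreserving_sub_left volume x) hGfin
    filter_upwards [h1] with y hy
    exact ENNReal.mul_lt_top ENNReal.ofReal_lt_top hy
  have hmeas : Measurable fun y => ENNReal.ofReal (w y) * G (x - y) :=
    (ENNReal.measurable_ofReal.comp hw).mul (hG.comp (measurable_const.sub measurable_id))
  have hkey := integral_toReal hmeas.aemeasurable hfin
  show (∫ y, w y * g (x - y)) = (∫⁻ y, ENNReal.ofReal (w y) * G (x - y)).toReal
  rw [← hkey]
  congr 1
  ext y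
  rw [hg, ENNReal.toReal_mul, ENNReal.toReal_ofReal (hw0 y)]

lemma Cconv_toReal {Q' : Edim → ℝ} (hQ'm : Measurable Q') (hQ'0 : ∀ x, 0 ≤ Q' x)
    (hF1 : ∫⁻ x, ENNReal.ofReal (Q' x) = 1) :
    ∀ k x, Cconv Q' k x = (CconvE (fun y => ENNReal.ofReal (Q' y)) k x).toReal
  | 0, x => by
      show Q' x = (ENNReal.ofReal (Q' x)).toReal
      rw [ENNReal.toReal_ofReal (hQ'0 x)]
  | 1, x => by
      show Q' x = (ENNReal.ofReal (Q' x)).toReal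
      rw [ENNReal.toReal_ofReal (hQ'0 x)]
  | (k + 2), x => by
      have hFm : Measurable fun y : Edim => ENNReal.ofReal (Q' y) :=
        ENNReal.measurable_ofReal.comp hQ'm
      have hfin : ∀ᵐ z, CconvE (fun y => ENNReal.ofReal (Q' y)) (k + 1) z < ∞ :=
        ae_lt_top (CconvE_meas hFm (k + 1))
          (by rw [lintegral_CconvE hFm hF1 (k + 1)]; exact ENNReal.one_ne_top)
      show conv Q' (Cconv Q' (k + 1)) x = _
      exact conv_toReal hQ'm hQ'0 (CconvE_meas hFm (k + 1)) hfin
        (fun z => Cconv_toReal hQ'm hQ'0 hF1 (k + 1) z) x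

lemma convIter_toReal {w : Edim → ℝ} (hw : Measurable w) (hw0 : ∀ y, 0 ≤ w y)
    {H : Edim → ℝ≥0∞} (hH : Measurable H)
    (hfin : ∀ k, ∀ᵐ x, convIterE (fun y => ENNReal.ofReal (w y)) k H x < ∞)
    {h : Edim → ℝ} (hh : ∀ z, h z = (H z).toReal) :
    ∀ k x, convIter w k h x = (convIterE (fun y => ENNReal.ofReal (w y)) k H x).toReal
  | 0, x => hh x
  | (k + 1), x => by
      have hFm : Measurable fun y : Edim => ENNReal.ofReal (w y) :=
        ENNReal.measurable_ofReal.comp hw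
      show conv w (convIter w k h) x = _
      exact conv_toReal hw hw0 (convIterE_meas hFm hH k) (hfin k)
        (fun z => convIter_toReal hw hw0 hH hfin hh k z) x

lemma conv_congr {f f' g g' : Edim → ℝ} (hf : f =ᵐ[volume] f') (hg : g =ᵐ[volume] g') :
    ∀ x, conv f g x = conv f' g' x := by
  intro x
  apply integral_congr_ae
  have hg' : ∀ᵐ y, g (x - y) = g' (x - y) :=
    ae_comp_mp (Measure.measurePreserving_sub_left volume x) hg
  filter_upwards [hf, hg'] with y h1 h2
  rw [h1, h2]

lemma Cconv_congr {f f' : Edim → ℝ} (hf : f =ᵐ[volume] f') :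
    ∀ k, Cconv f k =ᵐ[volume] Cconv f' k
  | 0 => hf
  | 1 => hf
  | (k + 2) =>
      Filter.EventuallyEq.of_eq (funext fun x => conv_congr hf (Cconv_congr hf (k + 1)) x)

lemma convIter_congr {f f' h h' : Edim → ℝ} (hf : f =ᵐ[volume] f') (hh : h =ᵐ[volume] h') :
    ∀ k, convIter f k h =ᵐ[volume] convIter f' k h'
  | 0 => hh
  | (k + 1) =>
      Filter.EventuallyEq.of_eq (funext fun x => conv_congr hf (convIter_congr hf hh k) x)

lemma self_mul_rpow (p : ℝ) (hp : 1 < p) (a : ℝ≥0∞) : a * a ^ (p - 1) = a ^ p := by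
  rcases eq_or_ne a 0 with rfl | ha0
  · rw [ENNReal.zero_rpow_of_pos (by linarith), ENNReal.zero_rpow_of_pos (by linarith), mul_zero]
  rcases eq_or_ne a ∞ with rfl | hatop
  · rw [ENNReal.top_rpow_of_pos (by linarith), ENNReal.top_rpow_of_pos (by linarith),
      ENNReal.top_mul_top]
  · have h1 : a ^ (1 : ℝ) * a ^ (p - 1) = a ^ p := by
      rw [← ENNReal.rpow_add _ _ ha0 hatop]; norm_num
    rw [ENNReal.rpow_one] at h1
    exact h1

end ELaux

open ELaux

open scoped ENNReal

theorem euler_lagrange_implies_extremal_value {d : ℕ} (hd : 1 ≤ d)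
    (p M Λ : ℝ) (hp : 1 < p) (hM : 0 < M) (hΛ : 0 < Λ) (n : ℕ) (hn : 1 ≤ n)
    (Q : EuclideanSpace ℝ (Fin d) → ℝ)
    (hQ_int : Integrable Q) (hQ_mem : MemLp Q (ENNReal.ofReal p))
    (hQ_nonneg : ∀ x, 0 ≤ Q x)
    (hQ1 : (∫ x, Q x) = 1) (hQp : (∫ x, Q x ^ p) = M)
    -- The Euler–Lagrange equation `𝒯(𝒞_{n-1}(Q)) ∗ (𝒞ₙ(Q))^{p-1} = (Λ/(Mn)) Q^{p-1} + Λ(n-1)/n`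
    -- on `{Q > 0}`, where `𝒯(𝒞_{n-1}(Q)) ∗ h = 𝒞_{n-1}(𝒯(Q)) ∗ h` is realized as `convIter`:
    (hEL : ∀ x, 0 < Q x →
      convIter (fun y => Q (-y)) (n - 1) (fun z => (Cconv Q n z) ^ (p - 1)) x
        = Λ / (M * n) * (Q x) ^ (p - 1) + Λ * (n - 1 : ℝ) / n) :
    (∫ x, (Cconv Q n x) ^ p) = Λ := by
  classical
  obtain ⟨m, rfl⟩ : ∃ m, n = m + 1 := ⟨n - 1, (Nat.succ_pred_eq_of_pos hn).symm⟩
  simp only [Nat.add_sub_cancel] at hEL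
  -- measurable nonnegative representative of Q
  obtain ⟨Q₀, hQ₀m, hQ₀ae⟩ := hQ_int.aemeasurable
  set Q' : EuclideanSpace ℝ (Fin d) → ℝ := fun x => max (Q₀ x) 0 with hQ'def
  have hQ'm : Measurable Q' := hQ₀m.max measurable_const
  have hQae : Q =ᵐ[volume] Q' := by
    filter_upwards [hQ₀ae] with x hx
    simp [hQ'def, ← hx, max_eq_left (hQ_nonneg x)]
  have hQ'0 : ∀ x, 0 ≤ Q' x := fun x => le_max_right _ _
  have hQ'int : Integrable Q' := hQ_int.congr hQae
  have hQ'1 : (∫ x, Q' x) = 1 := by rw [← integral_congr_ae hQae, hQ1]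
  -- `ℝ≥0∞`-valued data
  set F : EuclideanSpace ℝ (Fin d) → ℝ≥0∞ := fun x => ENNReal.ofReal (Q' x) with hFdef
  have hFm : Measurable F := ENNReal.measurable_ofReal.comp hQ'm
  have hF1 : ∫⁻ x, F x = 1 := by
    rw [hFdef]
    rw [← ofReal_integral_eq_lintegral_ofReal hQ'int (Filter.Eventually.of_forall hQ'0), hQ'1,
      ENNReal.ofReal_one]
  -- integrability of Q ^ p
  have hp0 : (0 : ℝ) < p := by linarith
  have hQp_int : Integrable (fun x => Q x ^ p) := by
    have h := hQ_mem.integrable_norm_rpow (by simp [hp0]) ENNReal.ofReal_ne_top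
    rw [ENNReal.toReal_ofReal hp0.le] at h
    refine h.congr (Filter.Eventually.of_forall fun x => ?_)
    simp [Real.norm_eq_abs, abs_of_nonneg (hQ_nonneg x)]
  have hQ'p_int : Integrable (fun x => Q' x ^ p) := by
    refine hQp_int.congr ?_
    filter_upwards [hQae] with x hx
    rw [hx]
  have hQ'p : (∫ x, Q' x ^ p) = M := by
    rw [← hQp]
    apply integral_congr_ae
    filter_upwards [hQae] with x hx
    rw [hx]
  have hFp : ∫⁻ x, F x ^ p = ENNReal.ofReal M := by
    have : ∀ x, F x ^ p = ENNReal.ofReal (Q' x ^ p) := fun x =>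
      ENNReal.ofReal_rpow_of_nonneg (hQ'0 x) hp0.le
    simp_rw [this]
    rw [← ofReal_integral_eq_lintegral_ofReal hQ'p_int
      (Filter.Eventually.of_forall fun x => Real.rpow_nonneg (hQ'0 x) p), hQ'p]
  -- conjugate exponent
  set q : ℝ := Real.conjExponent p with hqdef
  have hpq : p.HolderConjugate q := Real.HolderConjugate.conjExponent hp
  -- the ENNReal iterated convolution data
  set H : EuclideanSpace ℝ (Fin d) → ℝ≥0∞ := fun z => CconvE F (m + 1) z ^ (p - 1) with hHdef
  have hHm : Measurable H := (CconvE_meas hFm (m + 1)).pow_const _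
  have hFt : Measurable fun y : EuclideanSpace ℝ (Fin d) => F (-y) := hFm.comp measurable_neg
  have hFt1 : ∫⁻ y, F (-y) = 1 := by rw [lintegral_neg_eq F hFm, hF1]
  have hHq : ∫⁻ z, H z ^ q ≤ ENNReal.ofReal M := by
    have : ∀ z, H z ^ q = CconvE F (m + 1) z ^ p := by
      intro z
      rw [hHdef, ← ENNReal.rpow_mul, hpq.sub_one_mul_conj]
    simp_rw [this]
    exact (CconvE_Lp hFm hF1 hp (m + 1)).trans_eq hFp
  have hDEq : ∀ k, ∫⁻ x, convIterE (fun y => F (-y)) k H x ^ q ≤ ENNReal.ofReal M :=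
    fun k => (convIterE_Lq hFt hHm hFt1 hpq.symm.lt k).trans hHq
  have hDEfin : ∀ k, ∀ᵐ x, convIterE (fun y => F (-y)) k H x < ∞ := by
    intro k
    have h1 : ∀ᵐ x, convIterE (fun y => F (-y)) k H x ^ q < ∞ :=
      ae_lt_top ((convIterE_meas hFt hHm k).pow_const _)
        (lt_of_le_of_lt (hDEq k) ENNReal.ofReal_lt_top).ne
    filter_upwards [h1] with x hx
    exact (ENNReal.rpow_lt_top_iff_of_pos hpq.symm.pos).mp hx
  -- bridge between real and ENNReal pictures
  have hCbr : ∀ k x, Cconv Q' k x = (CconvE F k x).toReal := Cconv_toReal hQ'm hQ'0 hF1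
  have hw0 : ∀ y, 0 ≤ Q' (-y) := fun y => hQ'0 _
  have hwm : Measurable fun y : EuclideanSpace ℝ (Fin d) => Q' (-y) := hQ'm.comp measurable_neg
  have hIbr : ∀ k x, convIter (fun y => Q' (-y)) k (fun z => (Cconv Q' (m + 1) z) ^ (p - 1)) x
      = (convIterE (fun y => F (-y)) k H x).toReal := by
    intro k x
    exact convIter_toReal hwm hw0 hHm hDEfin
      (fun z => by rw [hCbr (m + 1) z, ENNReal.toReal_rpow]) k x
  -- a.e. transfer of the Euler-Lagrange equation to ENNReal
  have hQtae : (fun y => Q (-y)) =ᵐ[volume] fun y => Q' (-y) :=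
    ae_comp_mp (Measure.measurePreserving_neg volume) hQae
  have hhae : (fun z => (Cconv Q (m + 1) z) ^ (p - 1))
      =ᵐ[volume] fun z => (Cconv Q' (m + 1) z) ^ (p - 1) := by
    filter_upwards [Cconv_congr hQae (m + 1)] with z hz
    rw [hz]
  have hIae : convIter (fun y => Q (-y)) m (fun z => (Cconv Q (m + 1) z) ^ (p - 1))
      =ᵐ[volume] convIter (fun y => Q' (-y)) m (fun z => (Cconv Q' (m + 1) z) ^ (p - 1)) :=
    convIter_congr hQtae hhae m
  -- the real integrand `Q · R`
  have hnR : (0 : ℝ) < (m + 1 : ℕ) := by positivity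
  have hQR : ∀ x, Q x * (Λ / (M * ((m + 1 : ℕ) : ℝ)) * (Q x) ^ (p - 1)
        + Λ * (((m + 1 : ℕ) : ℝ) - 1) / ((m + 1 : ℕ) : ℝ))
      = Λ / (M * ((m + 1 : ℕ) : ℝ)) * (Q x) ^ p
        + Λ * (((m + 1 : ℕ) : ℝ) - 1) / ((m + 1 : ℕ) : ℝ) * Q x := by
    intro x
    have hqq : Q x * Q x ^ (p - 1) = Q x ^ p := by
      rcases eq_or_lt_of_le (hQ_nonneg x) with h | h
      · rw [← h, Real.zero_rpow (by linarith), Real.zero_rpow (by linarith), mul_zero]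
      · have h1 : Q x ^ (1 : ℝ) * Q x ^ (p - 1) = Q x ^ p := by
          rw [← Real.rpow_add h]; norm_num
        rw [Real.rpow_one] at h1
        exact h1
    calc Q x * (Λ / (M * ((m + 1 : ℕ) : ℝ)) * (Q x) ^ (p - 1)
          + Λ * (((m + 1 : ℕ) : ℝ) - 1) / ((m + 1 : ℕ) : ℝ))
        = Λ / (M * ((m + 1 : ℕ) : ℝ)) * (Q x * Q x ^ (p - 1))
          + Λ * (((m + 1 : ℕ) : ℝ) - 1) / ((m + 1 : ℕ) : ℝ) * Q x := by ring
      _ = _ := by rw [hqq]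
  have hQRint : Integrable (fun x => Λ / (M * ((m + 1 : ℕ) : ℝ)) * (Q x) ^ p
      + Λ * (((m + 1 : ℕ) : ℝ) - 1) / ((m + 1 : ℕ) : ℝ) * Q x) :=
    (hQp_int.const_mul _).add (hQ_int.const_mul _)
  have hQRval : (∫ x, (Λ / (M * ((m + 1 : ℕ) : ℝ)) * (Q x) ^ p
      + Λ * (((m + 1 : ℕ) : ℝ) - 1) / ((m + 1 : ℕ) : ℝ) * Q x)) = Λ := by
    rw [integral_add (hQp_int.const_mul _) (hQ_int.const_mul _),
      integral_const_mul, integral_const_mul, hQp, hQ1]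
    have hM' : M ≠ 0 := ne_of_gt hM
    have hn' : ((m + 1 : ℕ) : ℝ) ≠ 0 := ne_of_gt hnR
    field_simp
    ring
  -- the main a.e. identity
  have hae : ∀ᵐ x, F x * convIterE (fun y => F (-y)) m H x
      = ENNReal.ofReal (Λ / (M * ((m + 1 : ℕ) : ℝ)) * (Q x) ^ p
        + Λ * (((m + 1 : ℕ) : ℝ) - 1) / ((m + 1 : ℕ) : ℝ) * Q x) := by
    filter_upwards [hQae, hIae, hDEfin m] with x hx1 hx2 hx3
    have hR0 : 0 ≤ Λ / (M * ((m + 1 : ℕ) : ℝ)) * (Q x) ^ (p - 1)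
        + Λ * (((m + 1 : ℕ) : ℝ) - 1) / ((m + 1 : ℕ) : ℝ) := by
      have h1 : (0:ℝ) ≤ Λ / (M * ((m + 1 : ℕ) : ℝ)) * (Q x) ^ (p - 1) := by
        apply mul_nonneg
        · positivity
        · exact Real.rpow_nonneg (hQ_nonneg x) _
      have h2 : (0:ℝ) ≤ Λ * (((m + 1 : ℕ) : ℝ) - 1) / ((m + 1 : ℕ) : ℝ) := by
        apply div_nonneg _ hnR.le
        apply mul_nonneg hΛ.le
        have : (1:ℝ) ≤ ((m + 1 : ℕ) : ℝ) := by exact_mod_cast Nat.one_le_iff_ne_zero.mpr (by omega)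
        linarith
      linarith
    rcases lt_or_ge 0 (Q x) with hqx | hqx
    · have hEL' := hEL x hqx
      have hDE : (convIterE (fun y => F (-y)) m H x).toReal
          = Λ / (M * ((m + 1 : ℕ) : ℝ)) * (Q x) ^ (p - 1)
            + Λ * (((m + 1 : ℕ) : ℝ) - 1) / ((m + 1 : ℕ) : ℝ) := by
        rw [← hIbr m x, ← hx2, hEL']
      have hDE' : convIterE (fun y => F (-y)) m H x
          = ENNReal.ofReal (Λ / (M * ((m + 1 : ℕ) : ℝ)) * (Q x) ^ (p - 1)
            + Λ * (((m + 1 : ℕ) : ℝ) - 1) / ((m + 1 : ℕ) : ℝ)) := by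
        rw [← hDE, ENNReal.ofReal_toReal hx3.ne]
      have hFx : F x = ENNReal.ofReal (Q x) := by
        show ENNReal.ofReal (Q' x) = ENNReal.ofReal (Q x)
        rw [hx1]
      rw [hFx, hDE', ← ENNReal.ofReal_mul (hQ_nonneg x), hQR x]
    · have hqx0 : Q x = 0 := le_antisymm hqx (hQ_nonneg x)
      have hFx : F x = 0 := by
        show ENNReal.ofReal (Q' x) = 0
        rw [← hx1, hqx0, ENNReal.ofReal_zero]
      rw [hFx, zero_mul, hqx0]
      rw [Real.zero_rpow (ne_of_gt hp0)]
      norm_num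
  -- compute the lintegral two ways
  have key3 : (∫⁻ x, F x * convIterE (fun y => F (-y)) m H x) = ENNReal.ofReal Λ := by
    rw [lintegral_congr_ae hae,
      ← ofReal_integral_eq_lintegral_ofReal hQRint ?_, hQRval]
    filter_upwards with x
    have h1 : (0:ℝ) ≤ Λ / (M * ((m + 1 : ℕ) : ℝ)) * (Q x) ^ p := by
      apply mul_nonneg
      · positivity
      · exact Real.rpow_nonneg (hQ_nonneg x) _
    have h2 : (0:ℝ) ≤ Λ * (((m + 1 : ℕ) : ℝ) - 1) / ((m + 1 : ℕ) : ℝ) * Q x := by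
      apply mul_nonneg _ (hQ_nonneg x)
      apply div_nonneg _ hnR.le
      apply mul_nonneg hΛ.le
      have : (1:ℝ) ≤ ((m + 1 : ℕ) : ℝ) := by exact_mod_cast Nat.one_le_iff_ne_zero.mpr (by omega)
      linarith
    simp only [Pi.zero_apply]
    linarith
  have key1 : (∫⁻ x, F x * convIterE (fun y => F (-y)) m H x)
      = ∫⁻ z, CconvE F (m + 1) z * H z := by
    rw [adj_iter hFm hHm m F hFm, convIterE_self]
  have key2 : (∫⁻ z, CconvE F (m + 1) z * H z) = ∫⁻ z, CconvE F (m + 1) z ^ p := by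
    apply lintegral_congr
    intro z
    rw [hHdef]
    exact self_mul_rpow p hp _
  have hB : (∫⁻ z, CconvE F (m + 1) z ^ p) = ENNReal.ofReal Λ := by
    rw [← key2, ← key1, key3]
  -- conclude
  have hfinal : (∫ x, (Cconv Q (m + 1) x) ^ p) = ∫ x, ((CconvE F (m + 1) x) ^ p).toReal := by
    apply integral_congr_ae
    filter_upwards [Cconv_congr hQae (m + 1)] with x hx
    rw [hx, hCbr (m + 1) x, ENNReal.toReal_rpow]
  rw [hfinal, integral_toReal ((CconvE_meas hFm (m + 1)).pow_const p).aemeasurable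
    (ae_lt_top ((CconvE_meas hFm (m + 1)).pow_const p) (by rw [hB]; exact ENNReal.ofReal_ne_top)),
    hB, ENNReal.toReal_ofReal hΛ.le]
end

section
/- Let G(x) = α(1 − x²)₊ on ℝ for some α > 0. Then the threefold convolution G ∗ G ∗ G is not equal to any function of the form aG + b (with constants a, b) on [−1,1]. Equivalently, G ∗ G ∗ G restricted to a neighborhood of 0 is not a quadratic polynomial. -/
open MeasureTheory Real Set

/-- Convolution of functions on `ℝ` with respect to Lebesgue measure. -/
noncomputable def conv1 (f g : ℝ → ℝ) : ℝ → ℝ :=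
  fun x => ∫ y, f y * g (x - y)

private lemma hda (c₁ c₂ c₃ c₄ c₅ c₆ c₇ c₈ : ℝ) (t : ℝ) :
    HasDerivAt (fun s : ℝ => c₁*s + c₂*s^2 + c₃*s^3 + c₄*s^4 + c₅*s^5 + c₆*s^6 + c₇*s^7 + c₈*s^8)
      (c₁ + 2*c₂*t + 3*c₃*t^2 + 4*c₄*t^3 + 5*c₅*t^4 + 6*c₆*t^5 + 7*c₇*t^6 + 8*c₈*t^7) t := by
  have h := (((((((((hasDerivAt_id t).const_mul c₁).add
    ((hasDerivAt_pow 2 t).const_mul c₂)).add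
    ((hasDerivAt_pow 3 t).const_mul c₃)).add
    ((hasDerivAt_pow 4 t).const_mul c₄)).add
    ((hasDerivAt_pow 5 t).const_mul c₅)).add
    ((hasDerivAt_pow 6 t).const_mul c₆)).add
    ((hasDerivAt_pow 7 t).const_mul c₇)).add
    ((hasDerivAt_pow 8 t).const_mul c₈))
  refine h.congr_deriv ?_
  push_cast
  ring

private lemma integral_poly (c₁ c₂ c₃ c₄ c₅ c₆ c₇ c₈ a b v : ℝ) (f : ℝ → ℝ)
    (hf : ∀ t ∈ Set.uIcc a b,
      f t = c₁ + 2*c₂*t + 3*c₃*t^2 + 4*c₄*t^3 + 5*c₅*t^4 + 6*c₆*t^5 + 7*c₇*t^6 + 8*c₈*t^7)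
    (hv : (c₁*b + c₂*b^2 + c₃*b^3 + c₄*b^4 + c₅*b^5 + c₆*b^6 + c₇*b^7 + c₈*b^8)
        - (c₁*a + c₂*a^2 + c₃*a^3 + c₄*a^4 + c₅*a^5 + c₆*a^6 + c₇*a^7 + c₈*a^8) = v) :
    (∫ y in a..b, f y) = v := by
  rw [intervalIntegral.integral_congr
      (g := fun y => c₁ + 2*c₂*y + 3*c₃*y^2 + 4*c₄*y^3 + 5*c₅*y^4 + 6*c₆*y^5 + 7*c₇*y^6 + 8*c₈*y^7)
      (fun t ht => hf t ht),
    intervalIntegral.integral_eq_sub_of_hasDerivAt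
      (f := fun s : ℝ => c₁*s + c₂*s^2 + c₃*s^3 + c₄*s^4 + c₅*s^5 + c₆*s^6 + c₇*s^7 + c₈*s^8)
      (fun t _ => hda c₁ c₂ c₃ c₄ c₅ c₆ c₇ c₈ t)
      (Continuous.intervalIntegrable (by fun_prop) _ _)]
  linarith [hv]

private lemma Fpos (α u : ℝ) (h0 : 0 ≤ u) (h2 : u ≤ 2) :
    conv1 (fun t => α * max (1 - t ^ 2) 0) (fun t => α * max (1 - t ^ 2) 0) u
      = α^2 * (16/15 - 4/3*u^2 + 2/3*u^3 - u^5/30) := by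
  have hsupp : Function.support
      (fun y => (α * max (1 - y ^ 2) 0) * (α * max (1 - (u - y) ^ 2) 0)) ⊆ Ioc (u-1) 1 := by
    intro y hy
    simp only [Function.mem_support] at hy
    by_contra hmem
    rw [Set.mem_Ioc, not_and_or, not_lt, not_le] at hmem
    apply hy
    rcases hmem with h | h
    · have : max (1 - (u - y) ^ 2) 0 = 0 := max_eq_right (by nlinarith [sq_nonneg (u - y - 1)])
      rw [this]; ring
    · have : max (1 - y ^ 2) 0 = 0 := max_eq_right (by nlinarith [sq_nonneg (y - 1)])
      rw [this]; ring
  simp only [conv1]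
  rw [← intervalIntegral.integral_eq_integral_of_support_subset hsupp]
  refine integral_poly (α^2*(1-u^2)) (α^2*u) (α^2*(u^2-2)/3) (-(α^2*u)/2) (α^2/5) 0 0 0
    (u-1) 1 _ _ ?_ (by ring)
  intro t ht
  rw [uIcc_of_le (by linarith)] at ht
  obtain ⟨hta, htb⟩ := ht
  rw [max_eq_left (by nlinarith), max_eq_left (by nlinarith)]
  ring

private lemma Fneg (α u : ℝ) (h0 : -2 ≤ u) (h2 : u ≤ 0) :
    conv1 (fun t => α * max (1 - t ^ 2) 0) (fun t => α * max (1 - t ^ 2) 0) u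
      = α^2 * (16/15 - 4/3*u^2 - 2/3*u^3 + u^5/30) := by
  have hsupp : Function.support
      (fun y => (α * max (1 - y ^ 2) 0) * (α * max (1 - (u - y) ^ 2) 0)) ⊆ Ioc (-1) (u+1) := by
    intro y hy
    simp only [Function.mem_support] at hy
    by_contra hmem
    rw [Set.mem_Ioc, not_and_or, not_lt, not_le] at hmem
    apply hy
    rcases hmem with h | h
    · have : max (1 - y ^ 2) 0 = 0 := max_eq_right (by nlinarith [sq_nonneg (y + 1)])
      rw [this]; ring
    · have : max (1 - (u - y) ^ 2) 0 = 0 := max_eq_right (by nlinarith [sq_nonneg (u - y + 1)])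
      rw [this]; ring
  simp only [conv1]
  rw [← intervalIntegral.integral_eq_integral_of_support_subset hsupp]
  refine integral_poly (α^2*(1-u^2)) (α^2*u) (α^2*(u^2-2)/3) (-(α^2*u)/2) (α^2/5) 0 0 0
    (-1) (u+1) _ _ ?_ (by ring)
  intro t ht
  rw [uIcc_of_le (by linarith)] at ht
  obtain ⟨hta, htb⟩ := ht
  rw [max_eq_left (by nlinarith), max_eq_left (by nlinarith)]
  ring

set_option maxHeartbeats 2000000 in
private lemma Hcalc (α x : ℝ) (hx0 : 0 ≤ x) (hx1 : x ≤ 1) :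
    conv1 (conv1 (fun t => α * max (1 - t ^ 2) 0) (fun t => α * max (1 - t ^ 2) 0))
        (fun t => α * max (1 - t ^ 2) 0) x
      = α^3 * (47/40 - 5/6*x^2 + 1/4*x^4 - 1/30*x^6 + 1/2520*x^8) := by
  set G : ℝ → ℝ := fun t => α * max (1 - t ^ 2) 0 with hG
  have hsupp : Function.support (fun y => conv1 G G y * (α * max (1 - (x - y) ^ 2) 0))
      ⊆ Ioc (x-1) (x+1) := by
    intro y hy
    simp only [Function.mem_support] at hy
    by_contra hmem
    rw [Set.mem_Ioc, not_and_or, not_lt, not_le] at hmem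
    apply hy
    rcases hmem with h | h
    · have : max (1 - (x - y) ^ 2) 0 = 0 := max_eq_right (by nlinarith [sq_nonneg (x - y - 1)])
      rw [this]; ring
    · have : max (1 - (x - y) ^ 2) 0 = 0 := max_eq_right (by nlinarith [sq_nonneg (x - y + 1)])
      rw [this]; ring
  have hcalcA : (∫ y in (x-1)..0, conv1 G G y * (α * max (1 - (x - y) ^ 2) 0))
      = α^3 * (-(16/15 - 16/15*x^2)*(x-1) - 16/15*x*(x-1)^2 - (-4/5 + 4/9*x^2)*(x-1)^3
        - (-1/6 - 2/3*x + 1/6*x^2)*(x-1)^4 - (4/15 - 4/15*x)*(x-1)^5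
        - (7/60 - 1/180*x^2)*(x-1)^6 - (1/105*x)*(x-1)^7 - (-1/240)*(x-1)^8) := by
    refine integral_poly (α^3*(16/15 - 16/15*x^2)) (α^3*(16/15*x)) (α^3*(-4/5 + 4/9*x^2))
      (α^3*(-1/6 - 2/3*x + 1/6*x^2)) (α^3*(4/15 - 4/15*x)) (α^3*(7/60 - 1/180*x^2))
      (α^3*(1/105*x)) (α^3*(-1/240)) (x-1) 0 _ _ ?_ (by ring)
    intro t ht
    rw [uIcc_of_le (by linarith)] at ht
    obtain ⟨hta, htb⟩ := ht
    rw [Fneg α t (by linarith) htb, max_eq_left (by nlinarith)]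
    ring
  have hcalcB : (∫ y in (0:ℝ)..(x+1), conv1 G G y * (α * max (1 - (x - y) ^ 2) 0))
      = α^3 * ((16/15 - 16/15*x^2)*(x+1) + 16/15*x*(x+1)^2 + (-4/5 + 4/9*x^2)*(x+1)^3
        + (1/6 - 2/3*x - 1/6*x^2)*(x+1)^4 + (4/15 + 4/15*x)*(x+1)^5
        + (-7/60 + 1/180*x^2)*(x+1)^6 + (-1/105*x)*(x+1)^7 + (1/240)*(x+1)^8) := by
    refine integral_poly (α^3*(16/15 - 16/15*x^2)) (α^3*(16/15*x)) (α^3*(-4/5 + 4/9*x^2))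
      (α^3*(1/6 - 2/3*x - 1/6*x^2)) (α^3*(4/15 + 4/15*x)) (α^3*(-7/60 + 1/180*x^2))
      (α^3*(-1/105*x)) (α^3*(1/240)) 0 (x+1) _ _ ?_ (by ring)
    intro t ht
    rw [uIcc_of_le (by linarith)] at ht
    obtain ⟨hta, htb⟩ := ht
    rw [Fpos α t hta (by linarith), max_eq_left (by nlinarith)]
    ring
  have hiA : IntervalIntegrable (fun y => conv1 G G y * (α * max (1 - (x - y) ^ 2) 0))
      volume (x-1) 0 := by
    refine IntervalIntegrable.congr_ae (f := fun y : ℝ =>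
      α^3*(16/15 - 16/15*x^2) + 2*(α^3*(16/15*x))*y + 3*(α^3*(-4/5 + 4/9*x^2))*y^2
        + 4*(α^3*(-1/6 - 2/3*x + 1/6*x^2))*y^3 + 5*(α^3*(4/15 - 4/15*x))*y^4
        + 6*(α^3*(7/60 - 1/180*x^2))*y^5 + 7*(α^3*(1/105*x))*y^6 + 8*(α^3*(-1/240))*y^7)
      (Continuous.intervalIntegrable (by fun_prop) _ _) ?_
    refine (ae_restrict_mem measurableSet_uIoc).mono fun t ht => ?_
    rw [uIoc_of_le (by linarith : x - 1 ≤ 0)] at ht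
    obtain ⟨hta, htb⟩ := ht
    simp only [hG]
    rw [Fneg α t (by linarith) htb, max_eq_left (by nlinarith)]
    ring
  have hiB : IntervalIntegrable (fun y => conv1 G G y * (α * max (1 - (x - y) ^ 2) 0))
      volume 0 (x+1) := by
    refine IntervalIntegrable.congr_ae (f := fun y : ℝ =>
      α^3*(16/15 - 16/15*x^2) + 2*(α^3*(16/15*x))*y + 3*(α^3*(-4/5 + 4/9*x^2))*y^2
        + 4*(α^3*(1/6 - 2/3*x - 1/6*x^2))*y^3 + 5*(α^3*(4/15 + 4/15*x))*y^4
        + 6*(α^3*(-7/60 + 1/180*x^2))*y^5 + 7*(α^3*(-1/105*x))*y^6 + 8*(α^3*(1/240))*y^7)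
      (Continuous.intervalIntegrable (by fun_prop) _ _) ?_
    refine (ae_restrict_mem measurableSet_uIoc).mono fun t ht => ?_
    rw [uIoc_of_le (by linarith : (0:ℝ) ≤ x + 1)] at ht
    obtain ⟨hta, htb⟩ := ht
    simp only [hG]
    rw [Fpos α t hta.le (by linarith), max_eq_left (by nlinarith)]
    ring
  calc conv1 (conv1 G G) G x
      = ∫ y, conv1 G G y * (α * max (1 - (x - y) ^ 2) 0) := rfl
    _ = ∫ y in (x-1)..(x+1), conv1 G G y * (α * max (1 - (x - y) ^ 2) 0) :=
        (intervalIntegral.integral_eq_integral_of_support_subset hsupp).symm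
    _ = (∫ y in (x-1)..0, conv1 G G y * (α * max (1 - (x - y) ^ 2) 0))
        + ∫ y in (0:ℝ)..(x+1), conv1 G G y * (α * max (1 - (x - y) ^ 2) 0) :=
        (intervalIntegral.integral_add_adjacent_intervals hiA hiB).symm
    _ = α^3 * (47/40 - 5/6*x^2 + 1/4*x^4 - 1/30*x^6 + 1/2520*x^8) := by
        rw [hcalcA, hcalcB]; ring

theorem generalized_gaussian_not_critical (α : ℝ) (hα : 0 < α) :
    ¬ ∃ a b : ℝ, ∀ x ∈ Icc (-1 : ℝ) 1,
        conv1 (conv1 (fun t => α * max (1 - t ^ 2) 0) (fun t => α * max (1 - t ^ 2) 0))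
          (fun t => α * max (1 - t ^ 2) 0) x
          = a * (α * max (1 - x ^ 2) 0) + b := by
  rintro ⟨a, b, hab⟩
  have h0 := hab 0 (by norm_num)
  have hh := hab (1/2) (by norm_num)
  have h1 := hab 1 (by norm_num)
  rw [Hcalc α 0 (by norm_num) (by norm_num)] at h0
  rw [Hcalc α (1/2) (by norm_num) (by norm_num)] at hh
  rw [Hcalc α 1 (by norm_num) (by norm_num)] at h1
  norm_num at h0 hh h1
  have hα3 : 0 < α^3 := by positivity
  nlinarith [h0, hh, h1, hα3]
end
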